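/- Under the assumptions of Problem 2, i.e. assuming z ∈ ran( ∂f + Σ_{i=1}^m L_i^* (∂g_i □ ∂ℓ_i)(L_i · − r_i) + ∇h ), the set zer(A+B) is nonempty, where A : 𝒦 → 2^𝒦 is defined by A(x, v_1,…,v_m) = ( ∂f(x) − z + Σ_{i=1}^m L_i^* v_i ) × ∏_{i=1}^m ( −L_i x + ∂g_i^*(v_i) + r_i ) and B : 𝒦 → 𝒦 by B(x, v_1,…,v_m) = ( ∇h(x), ∇ℓ_1^*(v_1), …, ∇ℓ_m^*(v_m) ) on 𝒦 = ℋ ⊕ 𝒢_1 ⊕ ⋯ ⊕ 𝒢_m. -/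

import Mathlib

open scoped RealInnerProductSpace

noncomputable section

variable {E : Type*} [NormedAddCommGroup E] [InnerProductSpace ℝ E]

/-- The class Γ₀ : proper, lower semicontinuous, convex functions with values in ]-∞,+∞]. -/
def Gamma0 (f : E → EReal) : Prop :=
  (∃ x, f x ≠ ⊤) ∧ (∀ x, f x ≠ ⊥) ∧ LowerSemicontinuous f ∧
    ∀ x y : E, ∀ t : ℝ, 0 ≤ t → t ≤ 1 →
      f (t • x + (1 - t) • y) ≤ (t : EReal) * f x + ((1 - t : ℝ) : EReal) * f y

/-- Strong convexity (with some modulus σ > 0) for `EReal`-valued functions. -/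
def StronglyConvexE (f : E → EReal) : Prop :=
  ∃ σ : ℝ, 0 < σ ∧ ∀ x y : E, ∀ t : ℝ, 0 ≤ t → t ≤ 1 →
    f (t • x + (1 - t) • y) + ((σ / 2 * t * (1 - t) * ‖x - y‖ ^ 2 : ℝ) : EReal)
      ≤ (t : EReal) * f x + ((1 - t : ℝ) : EReal) * f y

/-- The subdifferential of `f` at `x`. -/
def subdiff (f : E → EReal) (x : E) : Set E :=
  {u | ∀ y, ((⟪y - x, u⟫ : ℝ) : EReal) + f x ≤ f y}

/-- The Fenchel conjugate of `f`. -/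
def conj (f : E → EReal) (u : E) : EReal := ⨆ x, ((⟪x, u⟫ : ℝ) : EReal) - f x

private lemma fa_ne_top {f : E → EReal} (hprop : ∃ x, f x ≠ ⊤)
    {a u : E} (hu : u ∈ subdiff f a) : f a ≠ ⊤ := by
  obtain ⟨x0, hx0⟩ := hprop
  intro hfa
  have := hu x0
  rw [hfa] at this
  simp at this
  exact hx0 this

private lemma conj_eq {f : E → EReal} (hprop : ∃ x, f x ≠ ⊤) (hbot : ∀ x, f x ≠ ⊥)
    {a u : E} (hu : u ∈ subdiff f a) :
    conj f u = ((⟪a, u⟫ - (f a).toReal : ℝ) : EReal) := by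
  have hne : f a ≠ ⊤ := fa_ne_top hprop hu
  have hfa : ((f a).toReal : EReal) = f a := EReal.coe_toReal hne (hbot a)
  apply le_antisymm
  · apply iSup_le
    intro x
    by_cases hfx : f x = ⊤
    · rw [hfx]; simp
    · have hfx' : ((f x).toReal : EReal) = f x := EReal.coe_toReal hfx (hbot x)
      have h1 := hu x
      rw [← hfa, ← hfx'] at h1
      rw [← EReal.coe_add] at h1
      rw [← hfx', ← EReal.coe_sub]
      rw [EReal.coe_le_coe_iff] at h1 ⊢
      have : ⟪x - a, u⟫ = ⟪x, u⟫ - ⟪a, u⟫ := by rw [inner_sub_left]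
      linarith [h1, this.symm.le]
  · have : ((⟪a, u⟫ : ℝ) : EReal) - f a ≤ conj f u := le_iSup (fun x => ((⟪x, u⟫ : ℝ) : EReal) - f x) a
    rw [← hfa] at this
    rw [← EReal.coe_sub] at this
    exact this

private lemma subdiff_flip {f : E → EReal} (hprop : ∃ x, f x ≠ ⊤) (hbot : ∀ x, f x ≠ ⊥)
    {a u : E} (hu : u ∈ subdiff f a) : a ∈ subdiff (conj f) u := by
  intro v
  rw [conj_eq hprop hbot hu]
  have hne : f a ≠ ⊤ := fa_ne_top hprop hu
  have hfa : ((f a).toReal : EReal) = f a := EReal.coe_toReal hne (hbot a)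
  have key : ((⟪a, v⟫ : ℝ) : EReal) - f a ≤ conj f v :=
    le_iSup (fun x => ((⟪x, v⟫ : ℝ) : EReal) - f x) a
  rw [← hfa, ← EReal.coe_sub] at key
  refine le_trans ?_ key
  rw [← EReal.coe_add, EReal.coe_le_coe_iff]
  have : ⟪v - u, a⟫ = ⟪a, v⟫ - ⟪a, u⟫ := by
    rw [real_inner_comm, inner_sub_right]
  linarith [this.le, this.ge]

private lemma subdiff_grad_unique [CompleteSpace E] {φ : E → ℝ} {w b gr : E}
    (hgd : HasGradientAt φ gr w)
    (hb : ∀ v : E, ⟪v - w, b⟫ + φ w ≤ φ v) : b = gr := by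
  have key : ∀ d : E, ⟪gr, d⟫ - ⟪d, b⟫ = 0 := by
    intro d
    have hfd : HasFDerivAt φ (InnerProductSpace.toDual ℝ E gr) w :=
      hasGradientAt_iff_hasFDerivAt.mp hgd
    have hcurve : HasDerivAt (fun t : ℝ => w + t • d) d 0 := by
      simpa using ((hasDerivAt_id (0:ℝ)).smul_const d).const_add w
    have hcomp : HasDerivAt (fun t : ℝ => φ (w + t • d)) ⟪gr, d⟫ 0 := by
      have hfd' : HasFDerivAt φ (InnerProductSpace.toDual ℝ E gr) (w + (0:ℝ) • d) := by
        simpa using hfd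
      have := hfd'.comp_hasDerivAt 0 hcurve
      simpa [InnerProductSpace.toDual_apply_apply, Function.comp_def] using this
    have hψ : HasDerivAt (fun t : ℝ => φ (w + t • d) - t * ⟪d, b⟫) (⟪gr, d⟫ - ⟪d, b⟫) 0 :=
      by simpa [Pi.sub_def] using hcomp.sub ((hasDerivAt_id (0:ℝ)).mul_const (⟪d, b⟫ : ℝ))
    have hmin : IsLocalMin (fun t : ℝ => φ (w + t • d) - t * ⟪d, b⟫) 0 := by
      apply Filter.Eventually.of_forall
      intro t
      have := hb (w + t • d)
      simp only [add_sub_cancel_left, real_inner_smul_left] at this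
      simp only [Set.mem_setOf_eq]
      simp
      nlinarith [this, real_inner_comm d b]
    exact hmin.hasDerivAt_eq_zero hψ
  have h2 : ∀ d : E, ⟪gr - b, d⟫ = (0:ℝ) := by
    intro d
    have := key d
    have h3 : ⟪b, d⟫ = ⟪d, b⟫ := real_inner_comm d b
    rw [inner_sub_left]
    rw [h3]
    linarith
  have := h2 (gr - b)
  rw [inner_self_eq_zero, sub_eq_zero] at this
  exact this.symm

/-- Under the assumptions of Problem 2, in particular the qualification
condition `z ∈ ran(∂f + Σᵢ Lᵢ*(∂gᵢ □ ∂ℓᵢ)(Lᵢ · − rᵢ) + ∇h)`, the set `zer(A + B)` is nonempty,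
where `A(x,v) = (∂f(x) − z + Σᵢ Lᵢ* vᵢ) × ∏ᵢ(−Lᵢ x + ∂gᵢ*(vᵢ) + rᵢ)` and
`B(x,v) = (∇h(x), ∇ℓ₁*(v₁), …, ∇ℓₘ*(vₘ))` on `𝒦 = ℋ ⊕ 𝒢₁ ⊕ ⋯ ⊕ 𝒢ₘ`.
(`hh` is the function `h`, `h'` its gradient, `lstar i` the — real-valued —
conjugate `ℓᵢ*`, and `lgrad i` its gradient.) -/
theorem statement10
    {H : Type*} [NormedAddCommGroup H] [InnerProductSpace ℝ H] [CompleteSpace H]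
    {m : ℕ} (hm : 0 < m)
    {G : Fin m → Type*} [∀ i, NormedAddCommGroup (G i)] [∀ i, InnerProductSpace ℝ (G i)]
    [∀ i, CompleteSpace (G i)]
    (z : H)
    (f : H → EReal) (hf : Gamma0 f)
    (hh : H → ℝ) (hhconv : ConvexOn ℝ Set.univ hh)
    (h' : H → H) (hh' : ∀ x, HasGradientAt hh (h' x) x)
    (βh : ℝ) (hβh : 0 < βh) (hhlip : LipschitzWith βh.toNNReal h')
    (r : ∀ i, G i)
    (g : ∀ i, G i → EReal) (hg : ∀ i, Gamma0 (g i))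
    (l : ∀ i, G i → EReal) (hl : ∀ i, Gamma0 (l i)) (hlsc : ∀ i, StronglyConvexE (l i))
    (L : ∀ i, H →L[ℝ] G i) (hL : ∀ i, L i ≠ 0)
    (lstar : ∀ i, G i → ℝ) (hlstar : ∀ i, ∀ v : G i, (lstar i v : EReal) = conj (l i) v)
    (lgrad : ∀ i, G i → G i) (hlgrad : ∀ i, ∀ v : G i, HasGradientAt (lstar i) (lgrad i v) v)
    (ν : Fin m → ℝ) (hν : ∀ i, 0 < ν i) (hliplg : ∀ i, LipschitzWith (ν i).toNNReal (lgrad i))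
    -- the qualification condition (10) of Problem 2 :
    -- z ∈ ran(∂f + Σᵢ Lᵢ*(∂gᵢ □ ∂ℓᵢ)(Lᵢ · − rᵢ) + ∇h)
    (hran : ∃ x : H, ∃ u ∈ subdiff f x, ∃ w : ∀ i, G i,
      (∀ i, ∃ a b : G i, L i x - r i = a + b ∧ w i ∈ subdiff (g i) a ∧ w i ∈ subdiff (l i) b) ∧
      z = u + ∑ i, ContinuousLinearMap.adjoint (L i) (w i) + h' x)
    -- the operators A and B on 𝒦 = ℋ ⊕ 𝒢₁ ⊕ ⋯ ⊕ 𝒢ₘ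
    (A : (H × ∀ i, G i) → Set (H × ∀ i, G i))
    (hA : ∀ p q : H × ∀ i, G i, q ∈ A p ↔
      (q.1 - ∑ i, ContinuousLinearMap.adjoint (L i) (p.2 i) + z ∈ subdiff f p.1) ∧
      ∀ i, q.2 i + L i p.1 - r i ∈ subdiff (conj (g i)) (p.2 i))
    (B : (H × ∀ i, G i) → H × ∀ i, G i)
    (hB : ∀ p : H × ∀ i, G i, B p = (h' p.1, fun i => lgrad i (p.2 i))) :
    -- zer(A + B) is nonempty
    ∃ p : H × ∀ i, G i, ∃ a ∈ A p, a + B p = 0 := by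
  obtain ⟨x, u, hu, w, hw, hz⟩ := hran
  refine ⟨(x, w), (-(h' x), fun i => -(lgrad i (w i))), ?_, ?_⟩
  · rw [hA]
    constructor
    · show -(h' x) - ∑ i, ContinuousLinearMap.adjoint (L i) (w i) + z ∈ subdiff f x
      have heq : -(h' x) - ∑ i, ContinuousLinearMap.adjoint (L i) (w i) + z = u := by
        rw [hz]; abel
      rw [heq]
      exact hu
    · intro i
      obtain ⟨a, b, hab, hga, hlb⟩ := hw i
      have hb := subdiff_flip (hl i).1 (hl i).2.1 hlb
      have hbr : ∀ v : G i, ⟪v - w i, b⟫ + lstar i (w i) ≤ lstar i v := by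
        intro v
        have h0 := hb v
        rw [← hlstar, ← hlstar, ← EReal.coe_add, EReal.coe_le_coe_iff] at h0
        exact h0
      have hbeq : b = lgrad i (w i) := subdiff_grad_unique (hlgrad i (w i)) hbr
      have ha := subdiff_flip (hg i).1 (hg i).2.1 hga
      have heq2 : -(lgrad i (w i)) + L i x - r i = a := by
        rw [← hbeq, add_sub_assoc, hab]
        abel
      show -(lgrad i (w i)) + L i (x, w).1 - r i ∈ subdiff (conj (g i)) (w i)
      rw [show (L i) ((x, w) : H × ∀ i, G i).1 = (L i) x from rfl, heq2]
      exact ha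
  · rw [hB]
    ext
    · simp
    · simp
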